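/- Let e ∈ ℝ^r and θ̃⁻ ∈ ℝ^p, let F be an r×r real symmetric matrix with F e = L θ̃⁻, and define the updated estimation error θ̃ := θ̃⁻ − P Lᵀ R⁻¹ e. Then the Lyapunov difference identity holds: θ̃ᵀ P⁻¹ θ̃ − θ̃⁻ᵀ (P⁻)⁻¹ θ̃⁻ = eᵀ ((F − I) R⁻¹ (F − I) − (L P⁻ Lᵀ + R)⁻¹) e. -/

import Mathlib

open Matrix

private lemma ekf_dotshift {m n : ℕ} (A : Matrix (Fin m) (Fin n) ℝ) (u : Fin m → ℝ)
    (w : Fin n → ℝ) : u ⬝ᵥ (A *ᵥ w) = (Aᵀ *ᵥ u) ⬝ᵥ w := by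
  rw [Matrix.dotProduct_mulVec, Matrix.mulVec_transpose]

private lemma ekf_dot2 {m n k : ℕ} (A : Matrix (Fin m) (Fin n) ℝ)
    (B : Matrix (Fin m) (Fin k) ℝ) (u : Fin n → ℝ) (w : Fin k → ℝ) :
    (A *ᵥ u) ⬝ᵥ (B *ᵥ w) = u ⬝ᵥ ((Aᵀ * B) *ᵥ w) := by
  calc (A *ᵥ u) ⬝ᵥ (B *ᵥ w) = (Aᵀᵀ *ᵥ u) ⬝ᵥ (B *ᵥ w) := by rw [transpose_transpose]
    _ = u ⬝ᵥ (Aᵀ *ᵥ (B *ᵥ w)) := (ekf_dotshift Aᵀ u (B *ᵥ w)).symm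
    _ = u ⬝ᵥ ((Aᵀ * B) *ᵥ w) := by rw [Matrix.mulVec_mulVec]

/-- Lyapunov difference identity for the EKF update:
`θ̃ᵀ P⁻¹ θ̃ − θ̃⁻ᵀ (P⁻)⁻¹ θ̃⁻ = eᵀ ((F − I) R⁻¹ (F − I) − (L P⁻ Lᵀ + R)⁻¹) e`. -/
theorem ekf_lyapunov_difference_identity
    (p r : ℕ) (hp : 0 < p) (hr : 0 < r)
    (Pminus : Matrix (Fin p) (Fin p) ℝ) (hPminus : Pminus.PosDef)
    (R : Matrix (Fin r) (Fin r) ℝ) (hR : R.PosDef)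
    (L : Matrix (Fin r) (Fin p) ℝ)
    (S : Matrix (Fin r) (Fin r) ℝ) (hS : S = L * Pminus * Lᵀ + R)
    (K : Matrix (Fin p) (Fin r) ℝ) (hK : K = Pminus * Lᵀ * S⁻¹)
    (P : Matrix (Fin p) (Fin p) ℝ) (hP : P = (1 - K * L) * Pminus)
    (e : Fin r → ℝ) (θminus : Fin p → ℝ)
    (F : Matrix (Fin r) (Fin r) ℝ) (hF : F.IsSymm)
    (hFe : F *ᵥ e = L *ᵥ θminus)
    (θ : Fin p → ℝ) (hθ : θ = θminus - (P * Lᵀ * R⁻¹) *ᵥ e) :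
    θ ⬝ᵥ (P⁻¹ *ᵥ θ) - θminus ⬝ᵥ (Pminus⁻¹ *ᵥ θminus) =
      e ⬝ᵥ (((F - 1) * R⁻¹ * (F - 1) - (L * Pminus * Lᵀ + R)⁻¹) *ᵥ e) := by
  -- symmetry and invertibility facts
  have hPmt : Pminusᵀ = Pminus := by exact (by simpa using hPminus.isHermitian : Pminus.IsSymm).eq
  have hRt : Rᵀ = R := by exact (by simpa using hR.isHermitian : R.IsSymm).eq
  have hSpd : S.PosDef := by
    rw [hS]
    exact Matrix.PosDef.posSemidef_add
      (by simpa using hPminus.posSemidef.mul_mul_conjTranspose_same L) hR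
  have hSt : Sᵀ = S := by exact (by simpa using hSpd.isHermitian : S.IsSymm).eq
  have hRinvT : R⁻¹ᵀ = R⁻¹ := by rw [Matrix.transpose_nonsing_inv, hRt]
  have hSinvT : S⁻¹ᵀ = S⁻¹ := by rw [Matrix.transpose_nonsing_inv, hSt]
  have hPmii : Pminus⁻¹⁻¹ = Pminus :=
    Matrix.nonsing_inv_nonsing_inv _ hPminus.det_pos.ne'.isUnit
  have hRii : R⁻¹⁻¹ = R := Matrix.nonsing_inv_nonsing_inv _ hR.det_pos.ne'.isUnit
  have hS' : R + L * Pminus * Lᵀ = S := by rw [hS]; abel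
  have hMpd : (Pminus⁻¹ + Lᵀ * R⁻¹ * L).PosDef :=
    Matrix.PosDef.add_posSemidef hPminus.inv
      (by simpa using hR.inv.posSemidef.conjTranspose_mul_mul_same L)
  have hP' : P = Pminus - Pminus * Lᵀ * S⁻¹ * L * Pminus := by
    rw [hP, Matrix.sub_mul, Matrix.one_mul, hK]
  -- Woodbury: the updated covariance is the inverse of the information matrix
  have hMinv : (Pminus⁻¹ + Lᵀ * R⁻¹ * L)⁻¹ = P := by
    have hU : IsUnit (R⁻¹⁻¹ + L * Pminus⁻¹⁻¹ * Lᵀ) := by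
      rw [hPmii, hRii, hS']; exact hSpd.isUnit
    have h := Matrix.add_mul_mul_inv_eq_sub Pminus⁻¹ Lᵀ R⁻¹ L
      hPminus.inv.isUnit hR.inv.isUnit hU
    rw [hPmii, hRii, hS'] at h
    rw [h, hP']
  have hPpd : P.PosDef := hMinv ▸ hMpd.inv
  have hPinv : P⁻¹ = Pminus⁻¹ + Lᵀ * R⁻¹ * L := by
    rw [← hMinv, Matrix.nonsing_inv_nonsing_inv _ hMpd.det_pos.ne'.isUnit]
  have key : (Pminus⁻¹ + Lᵀ * R⁻¹ * L) * P = 1 := by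
    rw [← hPinv]; exact Matrix.nonsing_inv_mul P hPpd.det_pos.ne'.isUnit
  have hPM : P * (Pminus⁻¹ + Lᵀ * R⁻¹ * L) = 1 := mul_eq_one_comm.mp key
  -- P is symmetric
  have hPt : Pᵀ = P := by
    rw [hP']
    simp [transpose_sub, transpose_mul, hSinvT, hPmt, transpose_transpose,
      Matrix.mul_assoc]
  -- Woodbury the other way: S⁻¹ = R⁻¹ − R⁻¹ L P Lᵀ R⁻¹
  have hSinv : S⁻¹ = R⁻¹ - R⁻¹ * L * P * Lᵀ * R⁻¹ := by
    have hU : IsUnit (Pminus⁻¹ + Lᵀ * R⁻¹ * L) := hMpd.isUnit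
    have h := Matrix.add_mul_mul_inv_eq_sub R L Pminus Lᵀ
      hR.isUnit hPminus.isUnit hU
    rw [hS', hMinv] at h
    exact h
  -- transpose of the gain-like matrix
  have hGt : (P * Lᵀ * R⁻¹)ᵀ = R⁻¹ * (L * P) := by
    rw [transpose_mul, transpose_mul, transpose_transpose, hPt, hRinvT]
  -- scalar computations
  have hT1 : θminus ⬝ᵥ ((Lᵀ * R⁻¹ * L) *ᵥ θminus) = e ⬝ᵥ ((F * R⁻¹ * F) *ᵥ e) := by
    have e1 : (Lᵀ * R⁻¹ * L) *ᵥ θminus = Lᵀ *ᵥ (R⁻¹ *ᵥ (L *ᵥ θminus)) := by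
      simp [Matrix.mulVec_mulVec, Matrix.mul_assoc]
    have e2 : (F * R⁻¹ * F) *ᵥ e = F *ᵥ (R⁻¹ *ᵥ (F *ᵥ e)) := by
      simp [Matrix.mulVec_mulVec, Matrix.mul_assoc]
    rw [e1, e2, ekf_dotshift, transpose_transpose, ekf_dotshift F, hF.eq, hFe]
  have hT2 : θminus ⬝ᵥ ((Lᵀ * R⁻¹) *ᵥ e) = e ⬝ᵥ ((F * R⁻¹) *ᵥ e) := by
    have e1 : (Lᵀ * R⁻¹) *ᵥ e = Lᵀ *ᵥ (R⁻¹ *ᵥ e) := by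
      simp [Matrix.mulVec_mulVec]
    have e2 : (F * R⁻¹) *ᵥ e = F *ᵥ (R⁻¹ *ᵥ e) := by
      simp [Matrix.mulVec_mulVec]
    rw [e1, e2, ekf_dotshift, transpose_transpose, ekf_dotshift F, hF.eq, hFe]
  have hT3 : ((P * Lᵀ * R⁻¹) *ᵥ e) ⬝ᵥ ((Pminus⁻¹ + Lᵀ * R⁻¹ * L) *ᵥ θminus)
      = e ⬝ᵥ ((R⁻¹ * F) *ᵥ e) := by
    rw [ekf_dot2]
    have e2 : (P * Lᵀ * R⁻¹)ᵀ * (Pminus⁻¹ + Lᵀ * R⁻¹ * L) = R⁻¹ * L := by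
      rw [hGt, Matrix.mul_assoc, Matrix.mul_assoc, hPM, Matrix.mul_one]
    rw [e2, ← Matrix.mulVec_mulVec, ← Matrix.mulVec_mulVec, hFe]
  have hT4 : ((P * Lᵀ * R⁻¹) *ᵥ e) ⬝ᵥ ((Lᵀ * R⁻¹) *ᵥ e)
      = e ⬝ᵥ ((R⁻¹ - S⁻¹) *ᵥ e) := by
    rw [ekf_dot2]
    have e2 : (P * Lᵀ * R⁻¹)ᵀ * (Lᵀ * R⁻¹) = R⁻¹ - S⁻¹ := by
      rw [hGt, hSinv]
      simp [Matrix.mul_assoc]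
    rw [e2]
  have hT3' : ((P * Lᵀ * R⁻¹) *ᵥ e) ⬝ᵥ (Pminus⁻¹ *ᵥ θminus)
      + ((P * Lᵀ * R⁻¹) *ᵥ e) ⬝ᵥ ((Lᵀ * R⁻¹ * L) *ᵥ θminus)
      = e ⬝ᵥ ((R⁻¹ * F) *ᵥ e) := by
    rw [← dotProduct_add, ← Matrix.add_mulVec]; exact hT3
  -- final assembly
  rw [hθ, hPinv, ← hS]
  have hMG : (Pminus⁻¹ + Lᵀ * R⁻¹ * L) *ᵥ ((P * Lᵀ * R⁻¹) *ᵥ e) = (Lᵀ * R⁻¹) *ᵥ e := by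
    rw [Matrix.mulVec_mulVec]
    have : (Pminus⁻¹ + Lᵀ * R⁻¹ * L) * (P * Lᵀ * R⁻¹) = Lᵀ * R⁻¹ := by
      rw [← Matrix.mul_assoc, ← Matrix.mul_assoc, key, Matrix.one_mul]
    rw [this]
  have hRHSm : (F - 1) * R⁻¹ * (F - 1) - S⁻¹
      = F * R⁻¹ * F - F * R⁻¹ - R⁻¹ * F + (R⁻¹ - S⁻¹) := by noncomm_ring
  rw [hRHSm]
  simp only [Matrix.mulVec_sub, Matrix.add_mulVec, Matrix.sub_mulVec, hMG,
    dotProduct_sub, dotProduct_add, sub_dotProduct, add_dotProduct]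
  simp only [Matrix.sub_mulVec, dotProduct_sub] at hT4
  linarith [hT1, hT2, hT3', hT4]
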